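/- arXiv:1701.07086 — 3 statements merged into one kernel-verified Lean document; each statement's English description precedes it below -/
import Mathlib

section
/- Let x_1,…,x_n be points in ℝ^p, let h ≤ n, and let H_1 ⊆ {1,…,n} with |H_1| = h. Let m_1 = (1/h)∑_{i∈H_1} x_i and S_1 = (1/h)∑_{i∈H_1}(x_i − m_1)(x_i − m_1)', and assume S_1 is positive definite. Define d_1(i) = (x_i − m_1)' S_1^{-1} (x_i − m_1). If H_2 ⊆ {1,…,n} with |H_2| = h satisfies ∑_{i∈H_2} d_1(i) ≤ ∑_{i∈H_1} d_1(i), and m_2, S_2 are the mean and sample covariance of the points indexed by H_2, then det(S_2) ≤ det(S_1), with equality if and only if m_2 = m_1 and S_2 = S_1. -/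
open Matrix BigOperators

/-- AM-GM style lemma: nonneg reals on `Fin p` with sum at most `p` have product
at most `1`, and the product is `1` only if all are `1`. -/
lemma mcd_amgm {p : ℕ} (f : Fin p → ℝ) (h0 : ∀ i, 0 ≤ f i) (hs : ∑ i, f i ≤ p) :
    ∏ i, f i ≤ 1 ∧ (∏ i, f i = 1 → ∀ i, f i = 1) := by
  have hterm : ∀ i, f i ≤ Real.exp (f i - 1) := fun i => by
    have := Real.add_one_le_exp (f i - 1); linarith
  have h1 : ∏ i, f i ≤ ∏ i, Real.exp (f i - 1) :=
    Finset.prod_le_prod (fun i _ => h0 i) (fun i _ => hterm i)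
  have h2 : ∏ i, Real.exp (f i - 1) = Real.exp (∑ i, f i - p) := by
    rw [← Real.exp_sum]
    congr 1
    rw [Finset.sum_sub_distrib]
    simp
  have h3 : Real.exp (∑ i, f i - (p : ℝ)) ≤ 1 := by
    rw [← Real.exp_zero]
    exact Real.exp_le_exp.2 (by linarith)
  rw [h2] at h1
  refine ⟨le_trans h1 h3, ?_⟩
  intro hprod
  by_contra hcon
  push_neg at hcon
  obtain ⟨i0, hi0⟩ := hcon
  have hpos : ∀ i, 0 < f i := by
    intro i
    rcases lt_or_eq_of_le (h0 i) with h | h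
    · exact h
    · exfalso
      have : ∏ j, f j = 0 := Finset.prod_eq_zero (Finset.mem_univ i) h.symm
      rw [hprod] at this; norm_num at this
  have hlt : f i0 < Real.exp (f i0 - 1) := by
    have hne : f i0 - 1 ≠ 0 := fun hx => hi0 (by linarith)
    have := Real.add_one_lt_exp hne
    linarith
  have hstrict : ∏ i, f i < ∏ i, Real.exp (f i - 1) :=
    Finset.prod_lt_prod (fun i _ => hpos i) (fun i _ => hterm i)
      ⟨i0, Finset.mem_univ i0, hlt⟩
  rw [h2, hprod] at hstrict
  linarith


/-- Trace of a hermitian real matrix is the sum of its eigenvalues. -/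
lemma mcd_trace_eq_sum_eigs {p : ℕ} {A : Matrix (Fin p) (Fin p) ℝ}
    (hA : A.IsHermitian) : A.trace = ∑ i, hA.eigenvalues i := by
  conv_lhs => rw [hA.spectral_theorem]
  rw [Unitary.conjStarAlgAut_apply, Matrix.trace_mul_comm, ← Matrix.mul_assoc,
    Matrix.mem_unitaryGroup_iff'.mp (hA.eigenvectorUnitary).2, Matrix.one_mul,
    Matrix.trace_diagonal]
  simp

/-- A hermitian real matrix whose eigenvalues are all `1` is the identity. -/
lemma mcd_eq_one_of_eigs_one {p : ℕ} {A : Matrix (Fin p) (Fin p) ℝ}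
    (hA : A.IsHermitian) (h1 : ∀ i, hA.eigenvalues i = 1) : A = 1 := by
  have hd : Matrix.diagonal (RCLike.ofReal ∘ hA.eigenvalues)
      = (1 : Matrix (Fin p) (Fin p) ℝ) := by
    rw [show RCLike.ofReal ∘ hA.eigenvalues = fun _ => (1 : ℝ) from
      funext fun i => by simp [h1 i], Matrix.diagonal_one]
  have h := hA.spectral_theorem
  rw [hd, map_one] at h
  exact h

/-- Quadratic form as a trace. -/
lemma mcd_dot_eq_trace {p : ℕ} (A : Matrix (Fin p) (Fin p) ℝ) (u : Fin p → ℝ) :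
    u ⬝ᵥ (A *ᵥ u) = (A * vecMulVec u u).trace := by
  simp only [Matrix.trace, Matrix.diag, Matrix.mul_apply, vecMulVec_apply, dotProduct,
    Matrix.mulVec, Finset.mul_sum]
  exact Finset.sum_congr rfl fun i _ => Finset.sum_congr rfl fun j _ => by ring

/-- Decomposition of the scatter matrix around a shifted center. -/
lemma mcd_sum_vecMulVec_shift {n p : ℕ} (x : Fin n → Fin p → ℝ) (H : Finset (Fin n))
    (m c : Fin p → ℝ) (hm : ∑ i ∈ H, x i = (H.card : ℝ) • m) :
    ∑ i ∈ H, vecMulVec (x i - c) (x i - c)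
      = ∑ i ∈ H, vecMulVec (x i - m) (x i - m)
        + (H.card : ℝ) • vecMulVec (m - c) (m - c) := by
  have hz : ∀ a, ∑ i ∈ H, (x i a - m a) = 0 := by
    intro a
    have hma := congrFun hm a
    simp only [Finset.sum_apply, Pi.smul_apply, smul_eq_mul] at hma
    rw [Finset.sum_sub_distrib, hma, Finset.sum_const, nsmul_eq_mul]
    ring
  ext a b
  simp only [Matrix.add_apply, Matrix.smul_apply, vecMulVec_apply, Pi.sub_apply,
    smul_eq_mul, Matrix.sum_apply]
  have expand : ∀ i ∈ H, (x i a - c a) * (x i b - c b)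
      = (x i a - m a) * (x i b - m b) + (m a - c a) * (x i b - m b)
        + (x i a - m a) * (m b - c b) + (m a - c a) * (m b - c b) := by
    intro i _; ring
  rw [Finset.sum_congr rfl expand]
  simp only [Finset.sum_add_distrib, ← Finset.mul_sum, ← Finset.sum_mul, hz a, hz b,
    Finset.sum_const, nsmul_eq_mul]
  ring

/-- `vecMulVec v v` is positive semidefinite. -/
lemma mcd_posSemidef_vecMulVec {p : ℕ} (v : Fin p → ℝ) :
    (vecMulVec v v).PosSemidef := by
  refine Matrix.PosSemidef.of_dotProduct_mulVec_nonneg ?_ ?_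
  · show (vecMulVec v v)ᴴ = _
    ext a b
    simp [Matrix.conjTranspose_apply, vecMulVec_apply, mul_comm]
  · intro y
    have : dotProduct (star y) (vecMulVec v v *ᵥ y) = (v ⬝ᵥ y) ^ 2 := by
      simp only [star_trivial, dotProduct, Matrix.mulVec, vecMulVec_apply, Finset.mul_sum]
      rw [sq]
      rw [Finset.sum_mul]
      refine Finset.sum_congr rfl fun i _ => ?_
      rw [Finset.mul_sum]
      exact Finset.sum_congr rfl fun j _ => by ring
    rw [this]
    positivity

/-- Sums of `vecMulVec v v` are positive semidefinite. -/
lemma mcd_posSemidef_sum {n p : ℕ} (v : Fin n → Fin p → ℝ) (H : Finset (Fin n)) :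
    (∑ i ∈ H, vecMulVec (v i) (v i)).PosSemidef := by
  classical
  induction H using Finset.induction with
  | empty => simp [Matrix.PosSemidef, Matrix.IsHermitian]
  | insert _ _ hni ih =>
    rw [Finset.sum_insert hni]
    exact (mcd_posSemidef_vecMulVec _).add ih

/-- C-step theorem for the MCD (the case ρ = 0 of the generalized C-step
theorem, with the weaker concentration hypothesis): if the sum of Mahalanobis
distances over `H₂` is at most that over `H₁`, then the covariance determinant
does not increase, with equality iff the mean and covariance are unchanged. -/
theorem mcd_C_step {n p : ℕ} (x : Fin n → (Fin p → ℝ)) (h : ℕ)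
    (hh : 0 < h) (hhn : h ≤ n)
    (H₁ H₂ : Finset (Fin n)) (hH₁ : H₁.card = h) (hH₂ : H₂.card = h)
    (m₁ m₂ : Fin p → ℝ) (S₁ S₂ : Matrix (Fin p) (Fin p) ℝ)
    (hm₁ : m₁ = (h : ℝ)⁻¹ • ∑ i ∈ H₁, x i)
    (hS₁ : S₁ = (h : ℝ)⁻¹ • ∑ i ∈ H₁, vecMulVec (x i - m₁) (x i - m₁))
    (hS₁pd : S₁.PosDef)
    (d₁ : Fin n → ℝ)
    (hd₁ : ∀ i, d₁ i = (x i - m₁) ⬝ᵥ (S₁⁻¹ *ᵥ (x i - m₁)))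
    (hconc : ∑ i ∈ H₂, d₁ i ≤ ∑ i ∈ H₁, d₁ i)
    (hm₂ : m₂ = (h : ℝ)⁻¹ • ∑ i ∈ H₂, x i)
    (hS₂ : S₂ = (h : ℝ)⁻¹ • ∑ i ∈ H₂, vecMulVec (x i - m₂) (x i - m₂)) :
    S₂.det ≤ S₁.det ∧ (S₂.det = S₁.det ↔ (m₂ = m₁ ∧ S₂ = S₁)) := by
  classical
  have hp0 : (0 : ℝ) < h := by exact_mod_cast hh
  have hpne : (h : ℝ) ≠ 0 := ne_of_gt hp0
  -- sums of the data points
  have hsum₁ : ∑ i ∈ H₁, x i = (h : ℝ) • m₁ := by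
    rw [hm₁, smul_smul, mul_inv_cancel₀ hpne, one_smul]
  have hsum₂ : ∑ i ∈ H₂, x i = (h : ℝ) • m₂ := by
    rw [hm₂, smul_smul, mul_inv_cancel₀ hpne, one_smul]
  have hT₁ : ∑ i ∈ H₁, vecMulVec (x i - m₁) (x i - m₁) = (h : ℝ) • S₁ := by
    rw [hS₁, smul_smul, mul_inv_cancel₀ hpne, one_smul]
  have hT₂ : ∑ i ∈ H₂, vecMulVec (x i - m₂) (x i - m₂) = (h : ℝ) • S₂ := by
    rw [hS₂, smul_smul, mul_inv_cancel₀ hpne, one_smul]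
  have hdec : ∑ i ∈ H₂, vecMulVec (x i - m₁) (x i - m₁)
      = (h : ℝ) • S₂ + (h : ℝ) • vecMulVec (m₂ - m₁) (m₂ - m₁) := by
    have := mcd_sum_vecMulVec_shift x H₂ m₂ m₁ (by rw [hH₂]; exact hsum₂)
    rw [hH₂, hT₂] at this
    exact this
  -- distances as traces
  have hdsum : ∀ H : Finset (Fin n), ∑ i ∈ H, d₁ i
      = (S₁⁻¹ * ∑ i ∈ H, vecMulVec (x i - m₁) (x i - m₁)).trace := by
    intro H
    rw [Finset.mul_sum, Matrix.trace_sum]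
    exact Finset.sum_congr rfl fun i _ => by rw [hd₁ i, mcd_dot_eq_trace]
  have hdetS₁ : 0 < S₁.det := hS₁pd.det_pos
  have hS₁unit : IsUnit S₁.det := isUnit_iff_ne_zero.2 (ne_of_gt hdetS₁)
  have hSinv : S₁⁻¹ * S₁ = 1 := Matrix.nonsing_inv_mul _ hS₁unit
  have e₁ : ∑ i ∈ H₁, d₁ i = (h : ℝ) * p := by
    rw [hdsum H₁, hT₁, Matrix.mul_smul, Matrix.trace_smul, hSinv, Matrix.trace_one]
    simp
  set q : ℝ := (m₂ - m₁) ⬝ᵥ (S₁⁻¹ *ᵥ (m₂ - m₁)) with hqdef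
  have e₂ : ∑ i ∈ H₂, d₁ i = (h : ℝ) * ((S₁⁻¹ * S₂).trace + q) := by
    rw [hdsum H₂, hdec, Matrix.mul_add, Matrix.trace_add, Matrix.mul_smul, Matrix.mul_smul,
      Matrix.trace_smul, Matrix.trace_smul, hqdef, mcd_dot_eq_trace]
    simp only [smul_eq_mul]
    ring
  have hkey : (S₁⁻¹ * S₂).trace + q ≤ (p : ℝ) := by
    rw [e₁, e₂] at hconc
    exact le_of_mul_le_mul_left hconc hp0
  have hq0 : 0 ≤ q := by
    have := (hS₁pd.posSemidef.inv).dotProduct_mulVec_nonneg (m₂ - m₁)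
    simpa [hqdef] using this
  -- S₂ is positive semidefinite
  have hS₂psd : S₂.PosSemidef := by
    rw [hS₂]
    have hsumpsd : (∑ i ∈ H₂, vecMulVec (x i - m₂) (x i - m₂)).PosSemidef :=
      mcd_posSemidef_sum (fun i => x i - m₂) H₂
    refine Matrix.PosSemidef.of_dotProduct_mulVec_nonneg ?_ ?_
    · show ((h : ℝ)⁻¹ • ∑ i ∈ H₂, vecMulVec (x i - m₂) (x i - m₂))ᴴ = _
      rw [Matrix.conjTranspose_smul, hsumpsd.1.eq, star_trivial]
    · intro y
      have := hsumpsd.dotProduct_mulVec_nonneg y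
      simp only [Matrix.smul_mulVec, dotProduct_smul, smul_eq_mul]
      positivity
  -- square root of S₁
  have hRpsd := hS₁pd.posSemidef
  set R := (open scoped MatrixOrder in CFC.sqrt S₁) with hRdef
  have hRR : R * R = S₁ := by open scoped MatrixOrder in exact CFC.sqrt_mul_sqrt_self S₁ hRpsd.nonneg
  have hRherm : R.IsHermitian := by open scoped MatrixOrder in exact (CFC.sqrt_nonneg S₁).posSemidef.1
  have hdetR : R.det ≠ 0 := by
    intro h0
    rw [← hRR, Matrix.det_mul, h0, mul_zero] at hdetS₁
    exact lt_irrefl _ hdetS₁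
  have hRunit : IsUnit R.det := isUnit_iff_ne_zero.2 hdetR
  have hRinvherm : (R⁻¹).IsHermitian := hRherm.inv
  set B := R⁻¹ * S₂ * R⁻¹ with hBdef
  have hBpsd : B.PosSemidef := by
    have := hS₂psd.mul_mul_conjTranspose_same R⁻¹
    rwa [hRinvherm.eq] at this
  have hRinv2 : R⁻¹ * R⁻¹ = S₁⁻¹ := by rw [← Matrix.mul_inv_rev, hRR]
  have htraceB : B.trace = (S₁⁻¹ * S₂).trace := by
    rw [hBdef, Matrix.trace_mul_comm (R⁻¹ * S₂) R⁻¹, ← Matrix.mul_assoc, hRinv2]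
  have hdetB : S₂.det = S₁.det * B.det := by
    rw [hBdef, Matrix.det_mul, Matrix.det_mul, Matrix.det_nonsing_inv, ← hRR, Matrix.det_mul,
      Ring.inverse_eq_inv]
    field_simp
  -- eigenvalues of B
  set f := hBpsd.1.eigenvalues with hf
  have hfnn : ∀ i, 0 ≤ f i := fun i => hBpsd.eigenvalues_nonneg i
  have hsumf : ∑ i, f i = B.trace := (mcd_trace_eq_sum_eigs hBpsd.1).symm
  have hprodf : ∏ i, f i = B.det := by
    have := hBpsd.1.det_eq_prod_eigenvalues
    simp only [RCLike.ofReal_real_eq_id, id_eq] at this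
    exact this.symm
  have hsum_le : ∑ i, f i ≤ (p : ℝ) := by
    rw [hsumf, htraceB]; linarith
  obtain ⟨hle, heq1⟩ := mcd_amgm f hfnn hsum_le
  have hBdet_le : B.det ≤ 1 := hprodf ▸ hle
  have hmain : S₂.det ≤ S₁.det := by
    rw [hdetB]
    calc S₁.det * B.det ≤ S₁.det * 1 :=
          mul_le_mul_of_nonneg_left hBdet_le (le_of_lt hdetS₁)
      _ = S₁.det := mul_one _
  refine ⟨hmain, ?_, ?_⟩
  · -- equality implies mean and covariance unchanged
    intro hdet
    have hBdet1 : B.det = 1 := by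
      have : S₁.det * B.det = S₁.det * 1 := by rw [mul_one, ← hdetB, hdet]
      exact mul_left_cancel₀ (ne_of_gt hdetS₁) this
    have hf1 : ∀ i, f i = 1 := heq1 (by rw [hprodf, hBdet1])
    have hB1 : B = 1 := mcd_eq_one_of_eigs_one hBpsd.1 hf1
    have htrB : B.trace = (p : ℝ) := by
      rw [← hsumf]
      simp [hf1]
    have hqzero : q = 0 := by
      have : (S₁⁻¹ * S₂).trace = (p : ℝ) := by rw [← htraceB, htrB]
      linarith [hkey, hq0, this]
    have hmm : m₂ = m₁ := by
      by_contra hne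
      have hΔ : m₂ - m₁ ≠ 0 := sub_ne_zero.2 hne
      have := hS₁pd.inv.dotProduct_mulVec_pos hΔ
      rw [show star (m₂ - m₁) = m₂ - m₁ from star_trivial _] at this
      rw [hqdef] at hqzero
      exact absurd hqzero (ne_of_gt this)
    refine ⟨hmm, ?_⟩
    have hRinvR : R⁻¹ * R = 1 := Matrix.nonsing_inv_mul _ hRunit
    have hRRinv : R * R⁻¹ = 1 := Matrix.mul_nonsing_inv _ hRunit
    have : R * B * R = S₂ := by
      rw [hBdef]
      simp only [Matrix.mul_assoc, hRinvR, Matrix.mul_one]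
      rw [← Matrix.mul_assoc, hRRinv, Matrix.one_mul]
    rw [← this, hB1, Matrix.mul_one, hRR]
  · rintro ⟨-, hSS⟩
    rw [hSS]
end

section
/- Let x_1,…,x_h be points in ℝ^p with mean m = (1/h)∑_{i=1}^h x_i and sample covariance S = (1/h)∑_{i=1}^h (x_i − m)(x_i − m)', and let y_1,…,y_{p+1} be points in ℝ^p with (1/(p+1))∑_j y_j = 0 and (1/(p+1))∑_j y_j y_j' = T. Let ρ ∈ [0,1], set k = h + p + 1, and define the augmented dataset consisting of the k points √(k(1−ρ)/h)·(x_i − m) for i = 1,…,h together with √(kρ/(p+1))·y_j for j = 1,…,p+1. Then the augmented dataset has mean zero, and its second-moment matrix (1/k)∑ (point)(point)' equals K = ρT + (1−ρ)S. -/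
open Matrix BigOperators

/-- The augmentation construction from the proof of the generalized C-step
theorem: combining the rescaled centered data points `√(k(1-ρ)/h)(xᵢ - m)` with
the rescaled artificial points `√(kρ/(p+1)) yⱼ` yields a dataset of `k = h+p+1`
points with mean zero whose second-moment matrix equals the regularized
covariance `K = ρT + (1-ρ)S`. -/
theorem augmented_dataset_mean_zero_cov_K {p h : ℕ} (hh : 0 < h)
    (x : Fin h → (Fin p → ℝ)) (y : Fin (p + 1) → (Fin p → ℝ))
    (m : Fin p → ℝ) (S T : Matrix (Fin p) (Fin p) ℝ)
    (ρ : ℝ) (hρ : ρ ∈ Set.Icc (0 : ℝ) 1)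
    (hm : m = (h : ℝ)⁻¹ • ∑ i, x i)
    (hS : S = (h : ℝ)⁻¹ • ∑ i, vecMulVec (x i - m) (x i - m))
    (hy0 : ((p : ℝ) + 1)⁻¹ • ∑ j, y j = 0)
    (hyT : ((p : ℝ) + 1)⁻¹ • ∑ j, vecMulVec (y j) (y j) = T)
    (k : ℕ) (hk : k = h + p + 1)
    (v : Fin h ⊕ Fin (p + 1) → (Fin p → ℝ))
    (hv : v = Sum.elim
      (fun i => Real.sqrt ((k : ℝ) * (1 - ρ) / (h : ℝ)) • (x i - m))
      (fun j => Real.sqrt ((k : ℝ) * ρ / ((p : ℝ) + 1)) • y j)) :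
    (k : ℝ)⁻¹ • ∑ a, v a = 0 ∧
    (k : ℝ)⁻¹ • ∑ a, vecMulVec (v a) (v a) = ρ • T + (1 - ρ) • S := by
  obtain ⟨hρ0, hρ1⟩ := hρ
  have hhne : (h : ℝ) ≠ 0 := Nat.cast_ne_zero.mpr hh.ne'
  have hpne : ((p : ℝ) + 1) ≠ 0 := by positivity
  have hkpos : (0 : ℝ) < k := by
    rw [hk]; push_cast; positivity
  have hkne : (k : ℝ) ≠ 0 := hkpos.ne'
  set c1 := Real.sqrt ((k : ℝ) * (1 - ρ) / (h : ℝ)) with hc1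
  set c2 := Real.sqrt ((k : ℝ) * ρ / ((p : ℝ) + 1)) with hc2
  have h1nn : (0 : ℝ) ≤ (k : ℝ) * (1 - ρ) / (h : ℝ) := by
    have : (0:ℝ) ≤ 1 - ρ := by linarith
    positivity
  have h2nn : (0 : ℝ) ≤ (k : ℝ) * ρ / ((p : ℝ) + 1) := by positivity
  have hc1sq : c1 * c1 = (k : ℝ) * (1 - ρ) / (h : ℝ) := Real.mul_self_sqrt h1nn
  have hc2sq : c2 * c2 = (k : ℝ) * ρ / ((p : ℝ) + 1) := Real.mul_self_sqrt h2nn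
  have hxsum : ∑ i, (x i - m) = 0 := by
    rw [Finset.sum_sub_distrib, Finset.sum_const, Finset.card_univ, Fintype.card_fin,
      hm, ← Nat.cast_smul_eq_nsmul ℝ, smul_inv_smul₀ hhne, sub_self]
  have hysum : ∑ j, y j = 0 := by
    have := hy0
    rwa [smul_eq_zero, or_iff_right (inv_ne_zero hpne)] at this
  constructor
  · rw [hv, Fintype.sum_sum_type]
    simp only [Sum.elim_inl, Sum.elim_inr, ← Finset.smul_sum, hxsum, hysum,
      smul_zero, add_zero, zero_add]
  · have hvv : ∀ a, vecMulVec (v a) (v a) =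
        Sum.elim (fun i => (c1 * c1) • vecMulVec (x i - m) (x i - m))
          (fun j => (c2 * c2) • vecMulVec (y j) (y j)) a := by
      intro a
      cases a with
      | inl i =>
        ext r s
        simp [hv, vecMulVec_apply, smul_eq_mul]; ring
      | inr j =>
        ext r s
        simp [hv, vecMulVec_apply, smul_eq_mul]; ring
    rw [Fintype.sum_congr _ _ hvv, Fintype.sum_sum_type]
    simp only [Sum.elim_inl, Sum.elim_inr, ← Finset.smul_sum]
    have hSx : ∑ i, vecMulVec (x i - m) (x i - m) = (h : ℝ) • S := by
      rw [hS, smul_inv_smul₀ hhne]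
    have hTy : ∑ j, vecMulVec (y j) (y j) = ((p : ℝ) + 1) • T := by
      rw [← hyT, smul_inv_smul₀ hpne]
    rw [hSx, hTy, hc1sq, hc2sq, smul_add, smul_smul, smul_smul, smul_smul, smul_smul]
    rw [add_comm]
    congr 1
    · congr 1
      field_simp
    · congr 1
      field_simp
end

section
/- Let v_1,…,v_k be points in ℝ^p with (1/k)∑_{i=1}^k v_i = 0, and suppose K̂ = (1/k)∑_{i=1}^k v_i v_i' is positive definite. Then for every symmetric positive definite p×p matrix S satisfying (1/k)∑_{i=1}^k v_i' S^{-1} v_i = p, one has det(K̂) ≤ det(S), with equality if and only if S = K̂. -/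
open Matrix BigOperators

/-- trace of a hermitian real matrix equals sum of eigenvalues -/
lemma trace_eq_sum_eig {n : ℕ} {A : Matrix (Fin n) (Fin n) ℝ} (hA : A.IsHermitian) :
    A.trace = ∑ i, hA.eigenvalues i := by
  conv_lhs => rw [hA.spectral_theorem]
  rw [Unitary.conjStarAlgAut_apply, Matrix.trace_mul_comm, ← mul_assoc,
    (Matrix.mem_unitaryGroup_iff').mp hA.eigenvectorUnitary.2, one_mul]
  simp [Matrix.trace_diagonal]

lemma det_le_one_of_trace {n : ℕ} {A : Matrix (Fin n) (Fin n) ℝ} (hA : A.PosDef)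
    (htr : A.trace = n) : A.det ≤ 1 ∧ (A.det = 1 ↔ A = 1) := by
  have hherm := hA.isHermitian
  set lam := hherm.eigenvalues with hlam
  have hpos : ∀ i, 0 < lam i := fun i => hA.eigenvalues_pos i
  have hdet : A.det = ∏ i, lam i := hherm.det_eq_prod_eigenvalues
  have htr' : ∑ i, lam i = n := by rw [← trace_eq_sum_eig hherm, htr]
  have hlog : ∀ i, Real.log (lam i) ≤ lam i - 1 :=
    fun i => Real.log_le_sub_one_of_pos (hpos i)
  have hdetpos : 0 < A.det := hA.det_pos
  have hsumlog : Real.log A.det = ∑ i, Real.log (lam i) := by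
    rw [hdet, Real.log_prod (fun i _ => (hpos i).ne')]
  have hsum_le : Real.log A.det ≤ 0 := by
    rw [hsumlog]
    calc ∑ i, Real.log (lam i) ≤ ∑ i, (lam i - 1) :=
          Finset.sum_le_sum fun i _ => hlog i
      _ = 0 := by rw [Finset.sum_sub_distrib, htr']; simp
  have hle : A.det ≤ 1 := by
    have := Real.exp_le_exp.mpr hsum_le
    rwa [Real.exp_log hdetpos, Real.exp_zero] at this
  refine ⟨hle, ?_, ?_⟩
  · intro h1
    -- all eigenvalues are 1
    have hall : ∀ i ∈ Finset.univ, lam i - 1 - Real.log (lam i) = 0 := by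
      have hsum0 : ∑ i, (lam i - 1 - Real.log (lam i)) = 0 := by
        rw [Finset.sum_sub_distrib, Finset.sum_sub_distrib, htr', ← hsumlog, h1,
          Real.log_one]
        simp
      exact (Finset.sum_eq_zero_iff_of_nonneg
        (fun i _ => by linarith [hlog i])).mp hsum0
    have heig1 : ∀ i, lam i = 1 := by
      intro i
      by_contra hne
      have := Real.log_lt_sub_one_of_pos (hpos i) hne
      have := hall i (Finset.mem_univ i)
      linarith
    have : A = 1 := by
      conv_lhs => rw [hherm.spectral_theorem]
      have : Matrix.diagonal (RCLike.ofReal ∘ hherm.eigenvalues) = (1 : Matrix (Fin n) (Fin n) ℝ) := by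
        have : (RCLike.ofReal ∘ hherm.eigenvalues : Fin n → ℝ) = fun _ => 1 := by
          funext i; simpa using heig1 i
        rw [this, Matrix.diagonal_one]
      rw [this, Unitary.conjStarAlgAut_apply, mul_one, (Matrix.mem_unitaryGroup_iff).mp hherm.eigenvectorUnitary.2]
    exact this
  · intro h; rw [h, Matrix.det_one]

lemma trace_mul_vecMulVec {p : ℕ} (M : Matrix (Fin p) (Fin p) ℝ) (w : Fin p → ℝ) :
    (M * vecMulVec w w).trace = w ⬝ᵥ (M *ᵥ w) := by
  simp only [Matrix.trace, Matrix.diag, Matrix.mul_apply, vecMulVec_apply,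
    dotProduct, mulVec, Finset.mul_sum]
  exact Finset.sum_congr rfl fun i _ => Finset.sum_congr rfl fun j _ => by ring

open scoped MatrixOrder

/-- Grübel's determinant-minimization property: among all symmetric positive
definite scatter matrices `S` for which a mean-zero dataset has average
squared Mahalanobis distance `p`, the second-moment matrix `K̂` of the data is
the unique minimizer of the determinant. -/
theorem grubel_det_min {p k : ℕ} (v : Fin k → (Fin p → ℝ))
    (hmean : (k : ℝ)⁻¹ • ∑ i, v i = 0)
    (Khat : Matrix (Fin p) (Fin p) ℝ)
    (hKhat : Khat = (k : ℝ)⁻¹ • ∑ i, vecMulVec (v i) (v i))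
    (hKhatpd : Khat.PosDef) :
    ∀ S : Matrix (Fin p) (Fin p) ℝ, S.PosDef →
      (k : ℝ)⁻¹ * ∑ i, v i ⬝ᵥ (S⁻¹ *ᵥ v i) = (p : ℝ) →
      Khat.det ≤ S.det ∧ (Khat.det = S.det ↔ S = Khat) := by
  intro S hS htrcond
  have hSinv : (S⁻¹).PosDef := hS.inv
  -- trace of S⁻¹ * Khat is p
  have htr : (S⁻¹ * Khat).trace = (p : ℝ) := by
    rw [hKhat, Matrix.mul_smul, Matrix.trace_smul, Matrix.mul_sum, Matrix.trace_sum]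
    rw [← htrcond]
    simp only [smul_eq_mul]
    congr 1
    exact Finset.sum_congr rfl fun i _ => trace_mul_vecMulVec _ _
  -- square root of S⁻¹
  set R := CFC.sqrt (S⁻¹) with hR
  have hRsd : R.PosSemidef := (CFC.sqrt_nonneg _).posSemidef
  have hRR : R * R = S⁻¹ := CFC.sqrt_mul_sqrt_self _ hSinv.posSemidef.nonneg
  have hRherm : R.IsHermitian := hRsd.isHermitian
  have hSdet : 0 < S.det := hS.det_pos
  have hSinvdet : 0 < (S⁻¹).det := hSinv.det_pos
  have hRdet : R.det ≠ 0 := by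
    intro h
    rw [← hRR, Matrix.det_mul, h, mul_zero] at hSinvdet
    exact lt_irrefl _ hSinvdet
  -- R is invertible as mulVec
  have hRx : ∀ x : Fin p → ℝ, x ≠ 0 → R *ᵥ x ≠ 0 := by
    intro x hx hRx0
    have hzero : (S⁻¹ *ᵥ x) = 0 := by
      rw [← hRR, ← Matrix.mulVec_mulVec, hRx0, Matrix.mulVec_zero]
    have hp := hSinv.dotProduct_mulVec_pos hx
    rw [hzero, dotProduct_zero] at hp
    exact lt_irrefl _ hp
  set A := R * Khat * R with hA
  have hApd : A.PosDef := by
    refine Matrix.PosDef.of_dotProduct_mulVec_pos ?_ ?_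
    · have : A = Rᴴ * Khat * R := by rw [hRherm.eq]
      rw [this]
      exact Matrix.isHermitian_conjTranspose_mul_mul R hKhatpd.isHermitian
    · intro x hx
      have h1 : star (R *ᵥ x) ⬝ᵥ (Khat *ᵥ (R *ᵥ x)) = star x ⬝ᵥ (A *ᵥ x) := by
        rw [star_mulVec, hRherm.eq, ← Matrix.dotProduct_mulVec, Matrix.mulVec_mulVec,
          Matrix.mulVec_mulVec, ← hA]
      rw [← h1]
      exact hKhatpd.dotProduct_mulVec_pos (hRx x hx)
  have hAtr : A.trace = (p : ℝ) := by
    rw [hA, Matrix.trace_mul_comm, ← mul_assoc, hRR, htr]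
  have hAdet : A.det = Khat.det * (S.det)⁻¹ := by
    rw [hA, Matrix.det_mul, Matrix.det_mul, mul_comm R.det, mul_assoc, ← Matrix.det_mul, hRR,
      Matrix.det_nonsing_inv, Ring.inverse_eq_inv']
  obtain ⟨hle, hiff⟩ := det_le_one_of_trace hApd hAtr
  constructor
  · rw [hAdet] at hle
    calc Khat.det = Khat.det * S.det⁻¹ * S.det := by
          field_simp
      _ ≤ 1 * S.det := by nlinarith
      _ = S.det := one_mul _
  · constructor
    · intro hdeq
      have hA1 : A.det = 1 := by
        rw [hAdet, hdeq, mul_inv_cancel₀ hSdet.ne']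
      have hAone : A = 1 := hiff.mp hA1
      -- R * Khat * R = 1 ⇒ Khat = (R*R)⁻¹ = S
      have hRinv : IsUnit R.det := isUnit_iff_ne_zero.mpr hRdet
      have h2 : Khat = R⁻¹ * R⁻¹ := by
        have e1 : R⁻¹ * (R * Khat * R) * R⁻¹ = R⁻¹ * 1 * R⁻¹ := by rw [← hA, hAone]
        rw [mul_one, ← mul_assoc, ← mul_assoc, Matrix.nonsing_inv_mul _ hRinv, one_mul,
          mul_assoc, Matrix.mul_nonsing_inv _ hRinv, mul_one] at e1
        exact e1
      have h3 : Khat = (R * R)⁻¹ := by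
        rw [Matrix.mul_inv_rev]; exact h2
      rw [h3, hRR, Matrix.nonsing_inv_nonsing_inv _ (isUnit_iff_ne_zero.mpr hSdet.ne')]
    · intro hSK
      rw [hSK]
end
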